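/- Let p, q be real numbers with 0 ≤ q < p² and √q < p, let J_{p,q} := (−√(p−√q), √(p−√q)) and h_{p,q}(s) := √(p − s² + √((p − s²)² − q)). Let I be a nonempty open interval with I ⊆ J_{p,q} and 0 ∉ I, and let y : I → ℝ be a twice differentiable solution of s·((s²−p)²−q)·y''(s) + (s⁴−p²+q)·y'(s) − s³·y(s) = 0 on I. Then there exist real numbers a, b such that y(s) = a·h_{p,q}(s) + b/h_{p,q}(s) for all s ∈ I. That is, h_{p,q} and 1/h_{p,q} form a basis of the space of solutions of this ODE on I. -/

import Mathlib

noncomputable def s6R (p q s : ℝ) : ℝ := Real.sqrt ((p - s^2)^2 - q)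
noncomputable def s6H (p q s : ℝ) : ℝ := Real.sqrt (p - s^2 + s6R p q s)

lemma s6R_pos {p q s : ℝ} (hR2 : 0 < (p - s^2)^2 - q) : 0 < s6R p q s := Real.sqrt_pos.2 hR2

lemma s6R_sq {p q s : ℝ} (hR2 : 0 < (p - s^2)^2 - q) : s6R p q s ^ 2 = (p - s^2)^2 - q :=
  Real.sq_sqrt hR2.le

lemma s6Q_pos {p q s : ℝ} (hR2 : 0 < (p - s^2)^2 - q) (hps : 0 < p - s^2) :
    0 < p - s^2 + s6R p q s := by
  have := s6R_pos (p := p) (q := q) (s := s) hR2; linarith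

lemma s6H_pos {p q s : ℝ} (hR2 : 0 < (p - s^2)^2 - q) (hps : 0 < p - s^2) : 0 < s6H p q s :=
  Real.sqrt_pos.2 (s6Q_pos hR2 hps)

lemma s6H_sq {p q s : ℝ} (hR2 : 0 < (p - s^2)^2 - q) (hps : 0 < p - s^2) :
    s6H p q s ^ 2 = p - s^2 + s6R p q s := Real.sq_sqrt (s6Q_pos hR2 hps).le

lemma hasDerivAt_s6R {p q s : ℝ} (hR2 : 0 < (p - s^2)^2 - q) :
    HasDerivAt (s6R p q) (-(2*s*(p-s^2)) / s6R p q s) s := by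
  have h1 : HasDerivAt (fun t : ℝ => (p - t^2)^2 - q)
      (2 * (p - s^2) ^ 1 * (0 - 2*s)) s := by
    have h0 : HasDerivAt (fun t : ℝ => p - t^2) (0 - 2*s) s := by
      have := (hasDerivAt_pow 2 s)
      exact (hasDerivAt_const s p).sub (by simpa using this)
    exact (h0.pow 2).sub_const q
  have h2 := h1.sqrt (ne_of_gt hR2)
  convert h2 using 1
  · rfl
  have hRpos := s6R_pos (p := p) (q := q) (s := s) hR2
  show -(2*s*(p-s^2)) / s6R p q s = _
  rw [show Real.sqrt ((p - s^2)^2 - q) = s6R p q s from rfl]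
  field_simp
  ring

lemma hasDerivAt_s6H {p q s : ℝ} (hR2 : 0 < (p - s^2)^2 - q) (hps : 0 < p - s^2) :
    HasDerivAt (s6H p q) (-(s * s6H p q s) / s6R p q s) s := by
  have hR := hasDerivAt_s6R (p := p) (q := q) (s := s) hR2
  have h1 : HasDerivAt (fun t : ℝ => p - t^2 + s6R p q t)
      ((0 - 2*s) + -(2*s*(p-s^2)) / s6R p q s) s := by
    have h0 : HasDerivAt (fun t : ℝ => p - t^2) (0 - 2*s) s :=
      (hasDerivAt_const s p).sub (by simpa using (hasDerivAt_pow 2 s))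
    exact h0.add hR
  have h2 := h1.sqrt (ne_of_gt (s6Q_pos hR2 hps))
  convert h2 using 1
  · rfl
  have hRpos := s6R_pos (p := p) (q := q) (s := s) hR2
  have hHpos := s6H_pos (p := p) (q := q) (s := s) hR2 hps
  have hH2 := s6H_sq (p := p) (q := q) (s := s) hR2 hps
  show -(s * s6H p q s) / s6R p q s = _
  rw [show Real.sqrt (p - s^2 + s6R p q s) = s6H p q s from rfl]
  field_simp
  linear_combination (-2*s) * hH2

lemma s6A_deriv {p q s : ℝ} (hs0 : s ≠ 0) (hR2 : 0 < (p - s^2)^2 - q) (hps : 0 < p - s^2)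
    (y : ℝ → ℝ) (y2 : ℝ) (hy1 : HasDerivAt y (deriv y s) s) (hy2 : HasDerivAt (deriv y) y2 s)
    (hode : s * ((s^2 - p)^2 - q) * y2 + (s^4 - p^2 + q) * deriv y s - s^3 * y s = 0) :
    HasDerivAt (fun t => (t * y t - s6R p q t * deriv y t) / (2 * t * s6H p q t)) 0 s := by
  have hRpos := s6R_pos (p := p) (q := q) (s := s) hR2
  have hHpos := s6H_pos (p := p) (q := q) (s := s) hR2 hps
  have hH2 := s6H_sq (p := p) (q := q) (s := s) hR2 hps
  have hr2 := s6R_sq (p := p) (q := q) (s := s) hR2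
  have hR := hasDerivAt_s6R (p := p) (q := q) (s := s) hR2
  have hH := hasDerivAt_s6H (p := p) (q := q) (s := s) hR2 hps
  have hN : HasDerivAt (fun t => t * y t - s6R p q t * deriv y t)
      (1 * y s + s * deriv y s - ((-(2*s*(p-s^2)) / s6R p q s) * deriv y s + s6R p q s * y2)) s :=
    ((hasDerivAt_id s).mul hy1).sub (hR.mul hy2)
  have hD : HasDerivAt (fun t => 2 * t * s6H p q t)
      ((2 * 1) * s6H p q s + (2 * s) * (-(s * s6H p q s) / s6R p q s)) s := by
    exact (((hasDerivAt_id s).const_mul 2).mul hH)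
  have hDne : 2 * s * s6H p q s ≠ 0 := by positivity
  have := hN.div hD hDne
  convert this using 1
  · rfl
  · rfl
  · rfl
  rw [eq_comm, div_eq_iff (by positivity)]
  field_simp
  ring_nf
  linear_combination (norm := ring_nf) (-1) * hode + (deriv y s - s * y2) * hr2

lemma s6B_deriv {p q s : ℝ} (hs0 : s ≠ 0) (hR2 : 0 < (p - s^2)^2 - q) (hps : 0 < p - s^2)
    (y : ℝ → ℝ) (y2 : ℝ) (hy1 : HasDerivAt y (deriv y s) s) (hy2 : HasDerivAt (deriv y) y2 s)
    (hode : s * ((s^2 - p)^2 - q) * y2 + (s^4 - p^2 + q) * deriv y s - s^3 * y s = 0) :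
    HasDerivAt (fun t => s6H p q t * (t * y t + s6R p q t * deriv y t) / (2 * t)) 0 s := by
  have hRpos := s6R_pos (p := p) (q := q) (s := s) hR2
  have hHpos := s6H_pos (p := p) (q := q) (s := s) hR2 hps
  have hH2 := s6H_sq (p := p) (q := q) (s := s) hR2 hps
  have hr2 := s6R_sq (p := p) (q := q) (s := s) hR2
  have hR := hasDerivAt_s6R (p := p) (q := q) (s := s) hR2
  have hH := hasDerivAt_s6H (p := p) (q := q) (s := s) hR2 hps
  have hN : HasDerivAt (fun t => s6H p q t * (t * y t + s6R p q t * deriv y t))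
      ((-(s * s6H p q s) / s6R p q s) * (s * y s + s6R p q s * deriv y s)
        + s6H p q s * (1 * y s + s * deriv y s + ((-(2*s*(p-s^2)) / s6R p q s) * deriv y s + s6R p q s * y2))) s :=
    hH.mul (((hasDerivAt_id s).mul hy1).add (hR.mul hy2))
  have hD : HasDerivAt (fun t : ℝ => 2 * t) 2 s := by
    simpa using (hasDerivAt_id s).const_mul 2
  have hDne : 2 * s ≠ 0 := by simp [hs0]
  have := hN.div hD hDne
  convert this using 1
  · rfl
  · rfl
  · rfl
  rw [eq_comm, div_eq_iff (by positivity)]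
  field_simp
  ring_nf
  linear_combination (norm := ring_nf) (s6H p q s) * hode + (s6H p q s * s * y2 - s6H p q s * deriv y s) * hr2


/-- For `0 ≤ q < p²`, `√q < p`, any twice differentiable solution of
`s((s²−p)²−q) y'' + (s⁴−p²+q) y' − s³ y = 0` on a nonempty open interval
`I ⊆ J_{p,q}` with `0 ∉ I` is of the form `a·h_{p,q} + b/h_{p,q}`; moreover `h_{p,q}`
and `1/h_{p,q}` are linearly independent on `I`, i.e. they form a basis of the solution
space. -/
theorem stmt_6 (p q : ℝ) (hq0 : 0 ≤ q) (hq : q < p ^ 2) (hp : Real.sqrt q < p)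
    (h : ℝ → ℝ)
    (hdef : ∀ s, h s = Real.sqrt (p - s ^ 2 + Real.sqrt ((p - s ^ 2) ^ 2 - q)))
    (I : Set ℝ) (hIo : IsOpen I) (hIc : I.OrdConnected) (hIne : I.Nonempty)
    (hIJ : I ⊆ Set.Ioo (-Real.sqrt (p - Real.sqrt q)) (Real.sqrt (p - Real.sqrt q)))
    (h0I : (0 : ℝ) ∉ I) (y : ℝ → ℝ)
    (hy1 : ∀ s ∈ I, DifferentiableAt ℝ y s)
    (hy2 : ∀ s ∈ I, DifferentiableAt ℝ (deriv y) s)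
    (hode : ∀ s ∈ I, s * ((s ^ 2 - p) ^ 2 - q) * deriv (deriv y) s
        + (s ^ 4 - p ^ 2 + q) * deriv y s - s ^ 3 * y s = 0) :
    (∃ a b : ℝ, ∀ s ∈ I, y s = a * h s + b / h s) ∧
    (∀ a b : ℝ, (∀ s ∈ I, a * h s + b / h s = 0) → a = 0 ∧ b = 0) := by
  have hh : ∀ t, h t = s6H p q t := fun t => hdef t
  have hkey : ∀ s ∈ I, s ≠ 0 ∧ 0 < p - s^2 ∧ 0 < (p - s^2)^2 - q := by
    intro s hs
    have hsJ := hIJ hs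
    have hc : 0 < p - Real.sqrt q := by
      have := Real.sqrt_nonneg q; linarith
    have habs : |s| < Real.sqrt (p - Real.sqrt q) := abs_lt.2 ⟨hsJ.1, hsJ.2⟩
    have hs2 : s^2 < p - Real.sqrt q := by
      calc s^2 = |s|^2 := (sq_abs s).symm
        _ < Real.sqrt (p - Real.sqrt q)^2 := by
            exact pow_lt_pow_left₀ habs (abs_nonneg s) (by norm_num)
        _ = p - Real.sqrt q := Real.sq_sqrt hc.le
    have hps : 0 < p - s^2 := by have := Real.sqrt_nonneg q; linarith
    have hR2 : 0 < (p - s^2)^2 - q := by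
      have hqe : Real.sqrt q ^ 2 = q := Real.sq_sqrt hq0
      nlinarith [Real.sqrt_nonneg q]
    exact ⟨fun h0 => h0I (h0 ▸ hs), hps, hR2⟩
  have hConv : Convex ℝ I := convex_iff_ordConnected.2 hIc
  have hconst : ∀ f : ℝ → ℝ, (∀ x ∈ I, HasDerivAt f 0 x) →
      ∀ x ∈ I, ∀ z ∈ I, f x = f z := by
    intro f hf x hx z hz
    refine hConv.is_const_of_fderivWithin_eq_zero
      (fun w hw => (hf w hw).differentiableAt.differentiableWithinAt) (fun w hw => ?_) hx hz
    rw [fderivWithin_of_isOpen hIo hw, (hf w hw).hasFDerivAt.fderiv]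
    ext t; simp
  set A : ℝ → ℝ := fun t => (t * y t - s6R p q t * deriv y t) / (2 * t * s6H p q t) with hA
  set B : ℝ → ℝ := fun t => s6H p q t * (t * y t + s6R p q t * deriv y t) / (2 * t) with hB
  have hAd : ∀ x ∈ I, HasDerivAt A 0 x := by
    intro x hx
    obtain ⟨hx0, hxps, hxR2⟩ := hkey x hx
    exact s6A_deriv hx0 hxR2 hxps y _ (hy1 x hx).hasDerivAt (hy2 x hx).hasDerivAt (hode x hx)
  have hBd : ∀ x ∈ I, HasDerivAt B 0 x := by
    intro x hx
    obtain ⟨hx0, hxps, hxR2⟩ := hkey x hx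
    exact s6B_deriv hx0 hxR2 hxps y _ (hy1 x hx).hasDerivAt (hy2 x hx).hasDerivAt (hode x hx)
  obtain ⟨s₀, hs₀⟩ := hIne
  constructor
  · refine ⟨A s₀, B s₀, fun s hs => ?_⟩
    rw [hconst A hAd s₀ hs₀ s hs, hconst B hBd s₀ hs₀ s hs, hh]
    obtain ⟨hs0, hps, hR2⟩ := hkey s hs
    have hHpos := s6H_pos hR2 hps
    have hRpos := s6R_pos (s := s) hR2
    show y s = (s * y s - s6R p q s * deriv y s) / (2 * s * s6H p q s) * s6H p q s
        + s6H p q s * (s * y s + s6R p q s * deriv y s) / (2 * s) / s6H p q s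
    field_simp
    ring
  · intro a b hab
    obtain ⟨hs0, hps, hR2⟩ := hkey s₀ hs₀
    have hHpos := s6H_pos hR2 hps
    have hRpos := s6R_pos (s := s₀) hR2
    have hH := hasDerivAt_s6H hR2 hps
    have hf : HasDerivAt (fun t => a * s6H p q t + b / s6H p q t)
        (a * (-(s₀ * s6H p q s₀) / s6R p q s₀)
          + (0 * s6H p q s₀ - b * (-(s₀ * s6H p q s₀) / s6R p q s₀)) / s6H p q s₀ ^ 2) s₀ :=
      (hH.const_mul a).add ((hasDerivAt_const s₀ b).div hH (ne_of_gt hHpos))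
    have hzero : HasDerivAt (fun t => a * s6H p q t + b / s6H p q t) 0 s₀ := by
      refine (hasDerivAt_const s₀ (0:ℝ)).congr_of_eventuallyEq ?_
      filter_upwards [hIo.mem_nhds hs₀] with t ht
      rw [← hh t]; exact hab t ht
    have hder := hf.unique hzero
    have hval : a * s6H p q s₀ + b / s6H p q s₀ = 0 := by rw [← hh s₀]; exact hab s₀ hs₀
    have hHne := ne_of_gt hHpos
    have hRne := ne_of_gt hRpos
    field_simp at hder hval
    have hfac : (s₀ * s6H p q s₀ * s6R p q s₀) * (b - a * s6H p q s₀ ^ 2) = 0 := by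
      linear_combination (s6H p q s₀ * s6R p q s₀) * hder
    have hne : s₀ * s6H p q s₀ * s6R p q s₀ ≠ 0 := mul_ne_zero (mul_ne_zero hs0 hHne) hRne
    have hba : b = a * s6H p q s₀ ^ 2 := by
      have h4 := (mul_eq_zero.1 hfac).resolve_left hne; linarith
    rw [hba] at hval
    have h3 : a * (2 * s6H p q s₀ ^ 2) = 0 := by linear_combination hval
    have ha : a = 0 := (mul_eq_zero.1 h3).resolve_right (by positivity)
    exact ⟨ha, by rw [hba, ha]; ring⟩
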